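/- Let n ≥ 1 and let a₁,…,a_n, b₁,…,b_n be real numbers with 0 < b_j < a_j/2 for all j. Then for every sufficiently small ε > 0 (in particular for all ε with 0 < ε < 2√(b_j) for each j) there exists an injective C^∞ map Ψ from the polydisc P(2√(b₁)−ε, …, 2√(b_n)−ε) = {z ∈ ℂⁿ : |z_j| < 2√(b_j)−ε for all j} into ℂⁿ such that at every point the derivative of Ψ preserves the standard symplectic form ω₀, and the image of Ψ is contained in the polyannulus A(a₁,b₁) × ⋯ × A(a_n,b_n), which is itself contained in the polydisc P(√(a₁+2b₁), …, √(a_n+2b_n)). -/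

import Mathlib

/-- The standard symplectic form `ω₀ = Σⱼ dxⱼ ∧ dyⱼ` on `ℂⁿ ≅ ℝ^{2n}`,
evaluated on a pair of tangent vectors. -/
def stdSymp (n : ℕ) (v w : Fin n → ℂ) : ℝ :=
  ∑ j, ((v j).re * (w j).im - (v j).im * (w j).re)


noncomputable def fAux (K r y : ℝ) : ℝ := K * Real.sqrt (r ^ 2 - y ^ 2)

noncomputable def FAux (K r y : ℝ) : ℝ :=
  K * (y * Real.sqrt (r ^ 2 - y ^ 2) + r ^ 2 * Real.arcsin (y / r)) / 2

noncomputable def psiAux (K r a : ℝ) (z : ℂ) : ℂ :=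
  (Real.sqrt (2 * FAux K r z.im + a) : ℂ) *
    Complex.exp ((-(z.re / fAux K r z.im) : ℝ) * Complex.I)

lemma sqrt_one_sub_div_sq {r y : ℝ} (hr : 0 < r) :
    Real.sqrt (1 - (y / r) ^ 2) = Real.sqrt (r ^ 2 - y ^ 2) / r := by
  rw [show (1 - (y / r) ^ 2) = (r ^ 2 - y ^ 2) / r ^ 2 by field_simp,
    Real.sqrt_div' _ (by positivity), Real.sqrt_sq hr.le]

lemma FAux_hasDerivAt {K r y : ℝ} (hr : 0 < r) (hy : y ^ 2 < r ^ 2) :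
    HasDerivAt (FAux K r) (fAux K r y) y := by
  have hpos : 0 < r ^ 2 - y ^ 2 := by linarith
  set s := Real.sqrt (r ^ 2 - y ^ 2) with hs_def
  have hs : 0 < s := Real.sqrt_pos.2 hpos
  have hs2 : s ^ 2 = r ^ 2 - y ^ 2 := Real.sq_sqrt hpos.le
  have hyr : (y / r) ^ 2 < 1 := by
    rw [div_pow]; rw [div_lt_one (by positivity)]; exact hy
  have hyr1 : y / r ≠ -1 := by intro h; rw [h] at hyr; norm_num at hyr
  have hyr2 : y / r ≠ 1 := by intro h; rw [h] at hyr; norm_num at hyr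
  have hinner : HasDerivAt (fun t : ℝ => r ^ 2 - t ^ 2) (-(2 * y)) y := by
    simpa using ((hasDerivAt_pow 2 y).const_sub (r ^ 2))
  have hsqrt : HasDerivAt (fun t : ℝ => Real.sqrt (r ^ 2 - t ^ 2))
      (1 / (2 * s) * (-(2 * y))) y :=
    (Real.hasDerivAt_sqrt hpos.ne').comp y hinner
  have hmul : HasDerivAt (fun t : ℝ => t * Real.sqrt (r ^ 2 - t ^ 2))
      (1 * s + y * (1 / (2 * s) * (-(2 * y)))) y :=
    (hasDerivAt_id y).mul hsqrt
  have harc : HasDerivAt (fun t : ℝ => Real.arcsin (t / r))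
      (1 / Real.sqrt (1 - (y / r) ^ 2) * (1 / r)) y := by
    have h := (Real.hasDerivAt_arcsin hyr1 hyr2).comp y ((hasDerivAt_id y).div_const r)
    exact h
  have hsum := ((hmul.add (harc.const_mul (r ^ 2))).const_mul K).div_const 2
  refine hsum.congr_deriv ?_
  symm
  rw [sqrt_one_sub_div_sq hr, ← hs_def]
  show K * s = _
  field_simp
  ring_nf
  linear_combination K * hs2


lemma fAux_pos {K r y : ℝ} (hK : 0 < K) (hy : y ^ 2 < r ^ 2) : 0 < fAux K r y := by
  have : 0 < r ^ 2 - y ^ 2 := by linarith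
  exact mul_pos hK (Real.sqrt_pos.2 this)

lemma fAux_hasDerivAt {K r y : ℝ} (hy : y ^ 2 < r ^ 2) :
    HasDerivAt (fAux K r) (K * (1 / (2 * Real.sqrt (r ^ 2 - y ^ 2)) * (-(2 * y)))) y := by
  have hpos : 0 < r ^ 2 - y ^ 2 := by linarith
  have hinner : HasDerivAt (fun t : ℝ => r ^ 2 - t ^ 2) (-(2 * y)) y := by
    simpa using ((hasDerivAt_pow 2 y).const_sub (r ^ 2))
  exact ((Real.hasDerivAt_sqrt hpos.ne').comp y hinner).const_mul K

lemma FAux_continuous (K r : ℝ) : Continuous (FAux K r) := by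
  unfold FAux
  have := Real.continuous_arcsin
  continuity

lemma FAux_strictMonoOn {K r : ℝ} (hr : 0 < r) (hK : 0 < K) :
    StrictMonoOn (FAux K r) (Set.Icc (-r) r) := by
  apply strictMonoOn_of_deriv_pos (convex_Icc _ _) (FAux_continuous K r).continuousOn
  intro y hy
  rw [interior_Icc, Set.mem_Ioo] at hy
  have hy2 : y ^ 2 < r ^ 2 := by nlinarith [hy.1, hy.2]
  rw [(FAux_hasDerivAt hr hy2).deriv]
  exact fAux_pos hK hy2

lemma FAux_top {K r : ℝ} (hr : 0 < r) : FAux K r r = K * Real.pi * r ^ 2 / 4 := by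
  unfold FAux
  rw [show r ^ 2 - r ^ 2 = 0 by ring, Real.sqrt_zero, div_self hr.ne', Real.arcsin_one]
  ring

lemma FAux_bot {K r : ℝ} (hr : 0 < r) : FAux K r (-r) = -(K * Real.pi * r ^ 2 / 4) := by
  unfold FAux
  rw [show r ^ 2 - (-r) ^ 2 = 0 by ring, Real.sqrt_zero,
    show (-r) / r = -1 by rw [neg_div, div_self hr.ne'], Real.arcsin_neg_one]
  ring

lemma FAux_bounds {K r y : ℝ} (hr : 0 < r) (hK : 0 < K) (hy : y ^ 2 < r ^ 2) :
    -(K * Real.pi * r ^ 2 / 4) < FAux K r y ∧ FAux K r y < K * Real.pi * r ^ 2 / 4 := by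
  have h1 : -r < y := by nlinarith
  have h2 : y < r := by nlinarith
  have hmem : y ∈ Set.Icc (-r) r := ⟨h1.le, h2.le⟩
  constructor
  · rw [← FAux_bot (K := K) hr]
    exact FAux_strictMonoOn hr hK ⟨le_refl _, by linarith⟩ hmem h1
  · rw [← FAux_top (K := K) hr]
    exact FAux_strictMonoOn hr hK hmem ⟨by linarith, le_refl _⟩ h2


lemma psiAux_contDiffAt {K r a : ℝ} {z : ℂ} (hr : 0 < r) (hK : 0 < K)
    (hy : z.im ^ 2 < r ^ 2) (ha : 0 < 2 * FAux K r z.im + a) :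
    ContDiffAt ℝ (⊤ : ℕ∞) (psiAux K r a) z := by
  have hpos : 0 < r ^ 2 - z.im ^ 2 := by linarith
  have hyr : (z.im / r) ^ 2 < 1 := by
    rw [div_pow, div_lt_one (by positivity)]; exact hy
  have hyr1 : z.im / r ≠ -1 := by intro h; rw [h] at hyr; norm_num at hyr
  have hyr2 : z.im / r ≠ 1 := by intro h; rw [h] at hyr; norm_num at hyr
  have him : ContDiffAt ℝ (⊤ : ℕ∞) (fun w : ℂ => w.im) z :=
    Complex.imCLM.contDiff.contDiffAt
  have hre : ContDiffAt ℝ (⊤ : ℕ∞) (fun w : ℂ => w.re) z :=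
    Complex.reCLM.contDiff.contDiffAt
  have hg : ContDiffAt ℝ (⊤ : ℕ∞) (fun w : ℂ => r ^ 2 - w.im ^ 2) z :=
    contDiffAt_const.sub (him.pow 2)
  have hsq : ContDiffAt ℝ (⊤ : ℕ∞) (fun w : ℂ => Real.sqrt (r ^ 2 - w.im ^ 2)) z :=
    (Real.contDiffAt_sqrt hpos.ne').comp z hg
  have harc : ContDiffAt ℝ (⊤ : ℕ∞) (fun w : ℂ => Real.arcsin (w.im / r)) z := by
    have h : ContDiffAt ℝ (⊤ : ℕ∞) (Real.arcsin ∘ fun w : ℂ => w.im / r) z :=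
      (Real.contDiffAt_arcsin hyr1 hyr2).comp z (him.div_const r)
    exact h
  have hF : ContDiffAt ℝ (⊤ : ℕ∞) (fun w : ℂ => FAux K r w.im) z := by
    unfold FAux
    exact (((contDiffAt_const.mul ((him.mul hsq).add (contDiffAt_const.mul harc)))).div_const 2)
  have hf : ContDiffAt ℝ (⊤ : ℕ∞) (fun w : ℂ => fAux K r w.im) z := by
    unfold fAux
    exact contDiffAt_const.mul hsq
  have hfne : fAux K r z.im ≠ 0 := by
    unfold fAux; positivity
  have hS : ContDiffAt ℝ (⊤ : ℕ∞) (fun w : ℂ => Real.sqrt (2 * FAux K r w.im + a)) z :=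
    (Real.contDiffAt_sqrt ha.ne').comp z ((contDiffAt_const.mul hF).add contDiffAt_const)
  have hSC : ContDiffAt ℝ (⊤ : ℕ∞)
      (fun w : ℂ => (Real.sqrt (2 * FAux K r w.im + a) : ℂ)) z :=
    Complex.ofRealCLM.contDiff.contDiffAt.comp z hS
  have hθ : ContDiffAt ℝ (⊤ : ℕ∞) (fun w : ℂ => -(w.re / fAux K r w.im)) z :=
    (hre.div hf hfne).neg
  have hθC : ContDiffAt ℝ (⊤ : ℕ∞)
      (fun w : ℂ => ((-(w.re / fAux K r w.im) : ℝ) : ℂ) * Complex.I) z :=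
    (Complex.ofRealCLM.contDiff.contDiffAt.comp z hθ).mul contDiffAt_const
  have hexp : ContDiffAt ℝ (⊤ : ℕ∞)
      (fun w : ℂ => Complex.exp (((-(w.re / fAux K r w.im) : ℝ) : ℂ) * Complex.I)) z :=
    Complex.contDiff_exp.contDiffAt.comp z hθC
  unfold psiAux
  exact hSC.mul hexp


lemma psiAux_fderiv {K r a : ℝ} {z : ℂ} (hr : 0 < r) (hK : 0 < K)
    (hy : z.im ^ 2 < r ^ 2) (ha : 0 < 2 * FAux K r z.im + a) :
    ∃ D : ℂ →L[ℝ] ℂ, HasFDerivAt (psiAux K r a) D z ∧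
      ∀ v w : ℂ, (D v).re * (D w).im - (D v).im * (D w).re
        = v.re * w.im - v.im * w.re := by
  have hf₀ : 0 < fAux K r z.im := fAux_pos hK hy
  have hR₀ : 0 < Real.sqrt (2 * FAux K r z.im + a) := Real.sqrt_pos.2 ha
  set f₀ := fAux K r z.im with hf₀def
  set R₀ := Real.sqrt (2 * FAux K r z.im + a) with hR₀def
  set E := Complex.exp ((-(z.re / f₀) : ℝ) * Complex.I) with hEdef
  have hdiff : DifferentiableAt ℝ (psiAux K r a) z :=
    (psiAux_contDiffAt hr hK hy ha).differentiableAt (by simp)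
  refine ⟨fderiv ℝ (psiAux K r a) z, hdiff.hasFDerivAt, ?_⟩
  set D := fderiv ℝ (psiAux K r a) z with hDdef
  have hD : HasFDerivAt (psiAux K r a) D z := hdiff.hasFDerivAt
  have hg : HasFDerivAt (psiAux K r a) D ((z.re : ℂ) + (z.im : ℂ) * Complex.I) := by
    rw [Complex.re_add_im]; exact hD
  -- slice 1 : x-direction
  have hl1 : HasDerivAt (fun t : ℝ => ((t : ℂ) + (z.im : ℂ) * Complex.I)) 1 z.re := by
    simpa using (Complex.ofRealCLM.hasDerivAt (x := z.re)).add_const ((z.im : ℂ) * Complex.I)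
  have hc1 : HasDerivAt (fun t : ℝ => psiAux K r a ((t : ℂ) + (z.im : ℂ) * Complex.I))
      (D 1) z.re := by
    have h := hD.comp_hasDerivAt_of_eq z.re hl1 (Complex.re_add_im z).symm
    exact h
  have hfun1 : (fun t : ℝ => psiAux K r a ((t : ℂ) + (z.im : ℂ) * Complex.I))
      = fun t : ℝ => (R₀ : ℂ) * Complex.exp (((-(t / f₀) : ℝ) : ℂ) * Complex.I) := by
    funext t
    simp [psiAux, hR₀def, hf₀def]
  rw [hfun1] at hc1
  have hA : HasDerivAt (fun t : ℝ => (R₀ : ℂ) * Complex.exp (((-(t / f₀) : ℝ) : ℂ) * Complex.I))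
      ((R₀ : ℂ) * (E * (((-(1 / f₀) : ℝ) : ℂ) * Complex.I))) z.re := by
    have hinner : HasDerivAt (fun t : ℝ => ((-(t / f₀) : ℝ) : ℂ) * Complex.I)
        (((-(1 / f₀) : ℝ) : ℂ) * Complex.I) z.re := by
      have h1 : HasDerivAt (fun t : ℝ => -(t / f₀)) (-(1 / f₀)) z.re := by
        exact ((hasDerivAt_id z.re).div_const f₀).neg
      exact (h1.ofReal_comp).mul_const Complex.I
    exact (hinner.cexp).const_mul (R₀ : ℂ)
  have hDA : D 1 = (R₀ : ℂ) * (E * (((-(1 / f₀) : ℝ) : ℂ) * Complex.I)) := hc1.unique hA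
  -- slice 2 : y-direction
  have hl2 : HasDerivAt (fun t : ℝ => ((z.re : ℂ) + (t : ℂ) * Complex.I)) Complex.I z.im := by
    simpa using ((Complex.ofRealCLM.hasDerivAt (x := z.im)).mul_const Complex.I).const_add
      ((z.re : ℂ))
  have hc2 : HasDerivAt (fun t : ℝ => psiAux K r a ((z.re : ℂ) + (t : ℂ) * Complex.I))
      (D Complex.I) z.im := by
    have h := hD.comp_hasDerivAt_of_eq z.im hl2 (Complex.re_add_im z).symm
    exact h
  have hfun2 : (fun t : ℝ => psiAux K r a ((z.re : ℂ) + (t : ℂ) * Complex.I))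
      = fun t : ℝ => ((Real.sqrt (2 * FAux K r t + a) : ℝ) : ℂ) *
          Complex.exp (((-(z.re / fAux K r t) : ℝ) : ℂ) * Complex.I) := by
    funext t
    simp [psiAux]
  rw [hfun2] at hc2
  set df := K * (1 / (2 * Real.sqrt (r ^ 2 - z.im ^ 2)) * (-(2 * z.im))) with hdfdef
  set c := -((0 * f₀ - z.re * df) / f₀ ^ 2) with hcdef
  have hB : HasDerivAt (fun t : ℝ => ((Real.sqrt (2 * FAux K r t + a) : ℝ) : ℂ) *
        Complex.exp (((-(z.re / fAux K r t) : ℝ) : ℂ) * Complex.I))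
      (((1 / (2 * R₀) * (2 * f₀) : ℝ) : ℂ) * E + (R₀ : ℂ) * (E * ((c : ℂ) * Complex.I)))
      z.im := by
    have hFd : HasDerivAt (FAux K r) f₀ z.im := FAux_hasDerivAt hr hy
    have hSd : HasDerivAt (fun t : ℝ => Real.sqrt (2 * FAux K r t + a))
        (1 / (2 * R₀) * (2 * f₀)) z.im := by
      have hin : HasDerivAt (fun t : ℝ => 2 * FAux K r t + a) (2 * f₀) z.im :=
        (hFd.const_mul 2).add_const a
      exact (Real.hasDerivAt_sqrt ha.ne').comp z.im hin
    have hfd : HasDerivAt (fAux K r) df z.im := fAux_hasDerivAt hy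
    have hθd : HasDerivAt (fun t : ℝ => -(z.re / fAux K r t)) c z.im :=
      ((hasDerivAt_const z.im z.re).div hfd hf₀.ne').neg
    have hexp2 : HasDerivAt (fun t : ℝ => Complex.exp (((-(z.re / fAux K r t) : ℝ) : ℂ) *
        Complex.I)) (E * ((c : ℂ) * Complex.I)) z.im :=
      ((hθd.ofReal_comp).mul_const Complex.I).cexp
    exact (hSd.ofReal_comp).mul hexp2
  have hDB : D Complex.I
      = ((1 / (2 * R₀) * (2 * f₀) : ℝ) : ℂ) * E + (R₀ : ℂ) * (E * ((c : ℂ) * Complex.I)) :=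
    hc2.unique hB
  -- the symplectic identity
  have hE : E.re ^ 2 + E.im ^ 2 = 1 := by
    have h := Complex.norm_exp_ofReal_mul_I (-(z.re / f₀))
    have h2 : ‖E‖ ^ 2 = 1 := by rw [hEdef, h]; norm_num
    rw [Complex.sq_norm, Complex.normSq_apply] at h2
    nlinarith [h2]
  have hAB : (D 1).re * (D Complex.I).im - (D 1).im * (D Complex.I).re = 1 := by
    rw [hDA, hDB]
    simp only [Complex.mul_re, Complex.mul_im, Complex.add_re, Complex.add_im,
      Complex.I_re, Complex.I_im, Complex.ofReal_re, Complex.ofReal_im]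
    field_simp
    ring_nf
    linear_combination (R₀ * f₀) * hE
  have hDv : ∀ v : ℂ, D v = v.re • D 1 + v.im • D Complex.I := by
    intro v
    have hv : v = v.re • (1 : ℂ) + v.im • Complex.I := by
      simpa [Complex.real_smul] using (Complex.re_add_im v).symm
    conv_lhs => rw [hv]
    rw [map_add, map_smul, map_smul]
  intro v w
  rw [hDv v, hDv w]
  simp only [Complex.add_re, Complex.add_im, Complex.smul_re, Complex.smul_im, smul_eq_mul]
  linear_combination (v.re * w.im - v.im * w.re) * hAB


lemma psiAux_abs (K r a : ℝ) (z : ℂ) :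
    ‖psiAux K r a z‖ = Real.sqrt (2 * FAux K r z.im + a) := by
  unfold psiAux
  rw [norm_mul, Complex.norm_exp_ofReal_mul_I, mul_one,
    Complex.norm_of_nonneg (Real.sqrt_nonneg _)]

set_option maxHeartbeats 1000000 in
lemma key {a b r : ℝ} (hb : 0 < b) (hba : b < a / 2) (hr : 0 < r) (hr2 : r ^ 2 < 4 * b) :
    ∃ ψ : ℂ → ℂ,
      Set.InjOn ψ {w : ℂ | ‖w‖ < r} ∧
      (∀ w : ℂ, ‖w‖ < r → ContDiffAt ℝ (⊤ : ℕ∞) ψ w) ∧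
      (∀ w : ℂ, ‖w‖ < r → ∃ D : ℂ →L[ℝ] ℂ, HasFDerivAt ψ D w ∧
        ∀ v u : ℂ, (D v).re * (D u).im - (D v).im * (D u).re
          = v.re * u.im - v.im * u.re) ∧
      (∀ w : ℂ, ‖w‖ < r →
        a - 2 * b < ‖ψ w‖ ^ 2 ∧ ‖ψ w‖ ^ 2 < a + 2 * b) := by
  have hπ := Real.pi_pos
  set K := (r ^ 2 + 4 * b) / (2 * Real.pi * r ^ 2) with hKdef
  clear_value K
  have hK : 0 < K := by rw [hKdef]; positivity
  have hTeq : K * Real.pi * r ^ 2 / 4 = (r ^ 2 + 4 * b) / 8 := by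
    rw [hKdef]; field_simp; ring
  have hT : K * Real.pi * r ^ 2 / 4 < b := by rw [hTeq]; linarith
  have hKπ : 1 < K * Real.pi := by
    have h : K * Real.pi = (r ^ 2 + 4 * b) / (2 * r ^ 2) := by rw [hKdef]; field_simp
    rw [h, lt_div_iff₀ (by positivity)]
    nlinarith
  have h2b : 2 * b < a := by linarith
  -- pointwise facts
  have basic : ∀ w : ℂ, ‖w‖ < r →
      w.re ^ 2 + w.im ^ 2 < r ^ 2 ∧ w.im ^ 2 < r ^ 2 ∧
        0 < 2 * FAux K r w.im + a ∧
        a - 2 * b < 2 * FAux K r w.im + a ∧ 2 * FAux K r w.im + a < a + 2 * b := by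
    intro w hw
    have h1 : ‖w‖ ^ 2 = w.re ^ 2 + w.im ^ 2 := by
      rw [Complex.sq_norm, Complex.normSq_apply]; ring
    have h2 : ‖w‖ ^ 2 < r ^ 2 :=
      pow_lt_pow_left₀ hw (norm_nonneg w) (by norm_num)
    have hx2 : w.re ^ 2 + w.im ^ 2 < r ^ 2 := by rw [← h1]; exact h2
    have hy2 : w.im ^ 2 < r ^ 2 := by nlinarith [sq_nonneg w.re]
    have hFb := FAux_bounds (K := K) hr hK hy2
    refine ⟨hx2, hy2, by linarith [hFb.1], by linarith [hFb.1], by linarith [hFb.2]⟩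
  refine ⟨psiAux K r a, ?_, ?_, ?_, ?_⟩
  · -- injectivity
    intro w hw w' hw' heq
    simp only [Set.mem_setOf_eq] at hw hw'
    obtain ⟨hx2, hy2, hpos, -, -⟩ := basic w hw
    obtain ⟨hx2', hy2', hpos', -, -⟩ := basic w' hw'
    have hyr : -r < w.im ∧ w.im < r := ⟨by nlinarith, by nlinarith⟩
    have hyr' : -r < w'.im ∧ w'.im < r := ⟨by nlinarith, by nlinarith⟩
    have habs := congrArg (fun x : ℂ => ‖x‖) heq
    rw [psiAux_abs, psiAux_abs] at habs
    have hFeq : FAux K r w.im = FAux K r w'.im := by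
      have := (Real.sqrt_inj hpos.le hpos'.le).1 habs
      linarith
    have hyeq : w.im = w'.im :=
      (FAux_strictMonoOn hr hK).injOn ⟨hyr.1.le, hyr.2.le⟩ ⟨hyr'.1.le, hyr'.2.le⟩ hFeq
    -- now the angles
    set s := Real.sqrt (r ^ 2 - w.im ^ 2) with hsdef
    clear_value s
    have hs : 0 < s := by rw [hsdef]; exact Real.sqrt_pos.2 (by linarith)
    have hs2 : s ^ 2 = r ^ 2 - w.im ^ 2 := by rw [hsdef]; exact Real.sq_sqrt (by linarith)
    have hf₀ : fAux K r w.im = K * s := by rw [hsdef]; rfl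
    have hf₀pos : 0 < fAux K r w.im := by rw [hf₀]; positivity
    have hxs : w.re ^ 2 < s ^ 2 := by rw [hs2]; linarith
    have hxs1 : -s < w.re := by nlinarith [sq_nonneg (w.re + s)]
    have hxs2 : w.re < s := by nlinarith [sq_nonneg (w.re - s)]
    have hxs1' : -s < w'.re := by
      have : w'.re ^ 2 < s ^ 2 := by rw [hs2, hyeq]; linarith
      nlinarith [sq_nonneg (w'.re + s)]
    have hxs2' : w'.re < s := by
      have : w'.re ^ 2 < s ^ 2 := by rw [hs2, hyeq]; linarith
      nlinarith [sq_nonneg (w'.re - s)]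
    have hsπ : s < Real.pi * (K * s) := by nlinarith
    have hθmem : ∀ x : ℝ, -s < x → x < s →
        -(x / fAux K r w.im) ∈ Set.Ioc (-Real.pi) Real.pi := by
      intro x h1 h2
      rw [hf₀]
      have hKs : (0:ℝ) < K * s := by positivity
      constructor
      · have h3 : x / (K * s) < Real.pi := by
          rw [div_lt_iff₀ hKs]; nlinarith
        linarith
      · have h3 : -Real.pi < x / (K * s) := by
          rw [lt_div_iff₀ hKs]; nlinarith
        linarith
    have hargeq : (-(w.re / fAux K r w.im)) = (-(w'.re / fAux K r w.im)) := by
      have hRne : ((Real.sqrt (2 * FAux K r w.im + a) : ℝ) : ℂ) ≠ 0 := by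
        exact_mod_cast (Real.sqrt_pos.2 hpos).ne'
      have heq2 : Complex.exp ((-(w.re / fAux K r w.im) : ℝ) * Complex.I)
          = Complex.exp ((-(w'.re / fAux K r w.im) : ℝ) * Complex.I) := by
        unfold psiAux at heq
        rw [← hyeq] at heq
        exact mul_left_cancel₀ hRne heq
      have harg : ∀ θ : ℝ, θ ∈ Set.Ioc (-Real.pi) Real.pi →
          Complex.arg (Complex.exp ((θ : ℂ) * Complex.I)) = θ := by
        intro θ hθ
        rw [Complex.exp_mul_I]
        exact Complex.arg_cos_add_sin_mul_I hθ
      have h1 := harg _ (hθmem w.re hxs1 hxs2)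
      have h2 := harg _ (hθmem w'.re hxs1' hxs2')
      rw [← h1, ← h2, heq2]
    have hxeq : w.re = w'.re := by
      field_simp [hf₀pos.ne'] at hargeq
      exact neg_inj.mp hargeq
    exact Complex.ext hxeq hyeq
  · intro w hw
    obtain ⟨hx2, hy2, hpos, -, -⟩ := basic w hw
    exact psiAux_contDiffAt hr hK hy2 hpos
  · intro w hw
    obtain ⟨hx2, hy2, hpos, -, -⟩ := basic w hw
    exact psiAux_fderiv hr hK hy2 hpos
  · intro w hw
    obtain ⟨hx2, hy2, hpos, hlow, hhigh⟩ := basic w hw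
    rw [psiAux_abs, Real.sq_sqrt hpos.le]
    exact ⟨hlow, hhigh⟩

/-- **Symplectic embedding of a polydisc into a polyannulus.**
For `0 < bⱼ < aⱼ/2` and every sufficiently small `ε > 0`
(namely `0 < ε < 2√(bⱼ)` for each `j`), the polydisc
`P(2√(b₁)-ε, …, 2√(bₙ)-ε)` embeds symplectically into the polyannulus
`A(a₁,b₁) × ⋯ × A(aₙ,bₙ)`, which in turn is contained in the polydisc
`P(√(a₁+2b₁), …, √(aₙ+2bₙ))`. -/
theorem polydisc_into_polyannulus (n : ℕ) (hn : 1 ≤ n) (a b : Fin n → ℝ)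
    (hb : ∀ j, 0 < b j) (hba : ∀ j, b j < a j / 2)
    (ε : ℝ) (hε : 0 < ε) (hεb : ∀ j, ε < 2 * Real.sqrt (b j)) :
    (∃ Ψ : (Fin n → ℂ) → (Fin n → ℂ),
      Set.InjOn Ψ {z : Fin n → ℂ | ∀ j, ‖z j‖ < 2 * Real.sqrt (b j) - ε} ∧
      ContDiffOn ℝ (⊤ : ℕ∞) Ψ
        {z : Fin n → ℂ | ∀ j, ‖z j‖ < 2 * Real.sqrt (b j) - ε} ∧
      (∀ z ∈ {z : Fin n → ℂ | ∀ j, ‖z j‖ < 2 * Real.sqrt (b j) - ε},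
        ∃ D : (Fin n → ℂ) →L[ℝ] (Fin n → ℂ), HasFDerivAt Ψ D z ∧
          ∀ v w : Fin n → ℂ, stdSymp n (D v) (D w) = stdSymp n v w) ∧
      Ψ '' {z : Fin n → ℂ | ∀ j, ‖z j‖ < 2 * Real.sqrt (b j) - ε}
        ⊆ {z : Fin n → ℂ | ∀ j, a j - 2 * b j < ‖z j‖ ^ 2
            ∧ ‖z j‖ ^ 2 < a j + 2 * b j}) ∧
    {z : Fin n → ℂ | ∀ j, a j - 2 * b j < ‖z j‖ ^ 2
        ∧ ‖z j‖ ^ 2 < a j + 2 * b j}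
      ⊆ {z : Fin n → ℂ | ∀ j, ‖z j‖ < Real.sqrt (a j + 2 * b j)} := by
  constructor
  · -- the embedding
    have hkey : ∀ j, ∃ ψ : ℂ → ℂ,
        Set.InjOn ψ {w : ℂ | ‖w‖ < 2 * Real.sqrt (b j) - ε} ∧
        (∀ w : ℂ, ‖w‖ < 2 * Real.sqrt (b j) - ε → ContDiffAt ℝ (⊤ : ℕ∞) ψ w) ∧
        (∀ w : ℂ, ‖w‖ < 2 * Real.sqrt (b j) - ε →
          ∃ D : ℂ →L[ℝ] ℂ, HasFDerivAt ψ D w ∧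
          ∀ v u : ℂ, (D v).re * (D u).im - (D v).im * (D u).re
            = v.re * u.im - v.im * u.re) ∧
        (∀ w : ℂ, ‖w‖ < 2 * Real.sqrt (b j) - ε →
          a j - 2 * b j < ‖ψ w‖ ^ 2 ∧
            ‖ψ w‖ ^ 2 < a j + 2 * b j) := by
      intro j
      have hsb : 0 < Real.sqrt (b j) := Real.sqrt_pos.2 (hb j)
      have hsb2 : Real.sqrt (b j) ^ 2 = b j := Real.sq_sqrt (hb j).le
      have hr : 0 < 2 * Real.sqrt (b j) - ε := by linarith [hεb j]
      have hr2 : (2 * Real.sqrt (b j) - ε) ^ 2 < 4 * b j := by nlinarith [hεb j]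
      exact key (hb j) (hba j) hr hr2
    choose ψ hinj hcd hfd him using hkey
    refine ⟨fun z j => ψ j (z j), ?_, ?_, ?_, ?_⟩
    · intro z hz z' hz' h
      funext j
      exact hinj j (hz j) (hz' j) (congrFun h j)
    · intro z hz
      apply ContDiffAt.contDiffWithinAt
      apply contDiffAt_pi.2
      intro j
      exact (hcd j (z j) (hz j)).comp z
        ((ContinuousLinearMap.proj j : (Fin n → ℂ) →L[ℝ] ℂ).contDiff.contDiffAt)
    · intro z hz
      choose Dj hDj hDj2 using fun j => hfd j (z j) (hz j)
      refine ⟨ContinuousLinearMap.pi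
        (fun j => (Dj j).comp (ContinuousLinearMap.proj j)), ?_, ?_⟩
      · apply hasFDerivAt_pi''
        intro j
        rw [ContinuousLinearMap.proj_pi]
        exact (hDj j).comp z
          ((ContinuousLinearMap.proj j : (Fin n → ℂ) →L[ℝ] ℂ).hasFDerivAt)
      · intro v w
        unfold stdSymp
        apply Finset.sum_congr rfl
        intro j _
        simpa using hDj2 j (v j) (w j)
    · rintro _ ⟨z, hz, rfl⟩ j
      exact him j (z j) (hz j)
  · intro z hz j
    have h := (hz j).2
    have h0 : 0 ≤ ‖z j‖ := norm_nonneg _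
    exact (Real.lt_sqrt h0).2 h
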